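/- arXiv:2512.16338 — 4 statements merged into one kernel-verified Lean document; each statement's English description precedes it below -/
import Mathlib

section
/- Let a < c be real numbers, let A : [a,c] → ℝ^{n×n} be continuous, and let y : [a,c] → ℝⁿ be differentiable with y'(t) = A(t) y(t) for all t ∈ [a,c]. Let V ⊆ ℝⁿ be a subspace with orthogonal projections Π_V, Π_{V⊥}, and let P ∈ ℝ^{n×n} be symmetric positive semidefinite with ker(P) = V⊥. Suppose there is a constant b ∈ ℝ such that for all t ∈ [a,c]: Π_V A(t) Π_{V⊥} = 0 and P A(t) Π_V + Π_V A(t)ᵀ P ⪯ 2 b P. Then y(t)ᵀ P y(t) ≤ e^{2b(t−a)} · y(a)ᵀ P y(a) for all t ∈ [a,c]. -/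
open Matrix

/-- Grönwall-type bound for the weighted semi-quadratic form along
a linear time-varying system. `Pv` is the orthogonal projection onto a subspace
`V ⊆ ℝⁿ`, `P` is symmetric PSD with `ker P = V⊥` (i.e. `P w = 0 ↔ Pv w = 0`).
If `Π_V A(t) Π_{V⊥} = 0` and `P A(t) Π_V + Π_V A(t)ᵀ P ⪯ 2 b P` on `[a,c]`,
then `y(t)ᵀ P y(t) ≤ e^{2b(t−a)} y(a)ᵀ P y(a)` on `[a,c]`. -/
theorem quadratic_form_gronwall
    (n : ℕ) (a c : ℝ) (hac : a < c)
    (A : ℝ → Matrix (Fin n) (Fin n) ℝ) (hAcont : ContinuousOn A (Set.Icc a c))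
    (y : ℝ → Fin n → ℝ)
    (hy : ∀ t ∈ Set.Icc a c, HasDerivAt y ((A t).mulVec (y t)) t)
    (Pv : Matrix (Fin n) (Fin n) ℝ) (hPvsym : Pv.IsSymm) (hPvidem : Pv * Pv = Pv)
    (P : Matrix (Fin n) (Fin n) ℝ) (hP : P.PosSemidef)
    (hker : ∀ w : Fin n → ℝ, P.mulVec w = 0 ↔ Pv.mulVec w = 0)
    (b : ℝ)
    (hinv : ∀ t ∈ Set.Icc a c, Pv * A t * (1 - Pv) = 0)
    (hb : ∀ t ∈ Set.Icc a c,
      ((2 * b) • P - (P * A t * Pv + Pv * (A t)ᵀ * P)).PosSemidef) :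
    ∀ t ∈ Set.Icc a c,
      y t ⬝ᵥ P.mulVec (y t) ≤ Real.exp (2 * b * (t - a)) * (y a ⬝ᵥ P.mulVec (y a)) := by
  classical
  have hPsym : Pᵀ = P := by
    have := hP.1
    rwa [Matrix.IsHermitian, conjTranspose_eq_transpose_of_trivial] at this
  -- P * (1 - Pv) = 0
  have hPv1 : P * (1 - Pv) = 0 := by
    have key : ∀ v, (P * (1 - Pv)) *ᵥ v = 0 := by
      intro v
      rw [← mulVec_mulVec, hker, mulVec_mulVec]
      have : Pv * (1 - Pv) = 0 := by rw [mul_sub, mul_one, hPvidem, sub_self]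
      rw [this, zero_mulVec]
    ext i j
    have := congrFun (key (Pi.single j 1)) i
    simpa [mulVec_single] using this
  have hPPv : P * Pv = P := by
    have := hPv1
    rw [mul_sub, mul_one, sub_eq_zero] at this
    exact this.symm
  -- P * A t = P * A t * Pv and (A t)ᵀ * P = Pv * (A t)ᵀ * P on [a,c]
  have hPA : ∀ t ∈ Set.Icc a c, P * A t * Pv = P * A t := by
    intro t ht
    have h1 : Pv * A t * Pv = Pv * A t := by
      have := hinv t ht
      rw [mul_sub, mul_one, sub_eq_zero] at this
      exact this.symm
    calc P * A t * Pv = P * Pv * A t * Pv := by rw [hPPv]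
      _ = P * (Pv * A t * Pv) := by simp only [mul_assoc]
      _ = P * (Pv * A t) := by rw [h1]
      _ = P * Pv * A t := by simp only [mul_assoc]
      _ = P * A t := by rw [hPPv]
  have hAP : ∀ t ∈ Set.Icc a c, Pv * (A t)ᵀ * P = (A t)ᵀ * P := by
    intro t ht
    have := congrArg Matrix.transpose (hPA t ht)
    simp only [transpose_mul, hPsym, hPvsym.eq] at this
    rwa [← mul_assoc] at this
  -- componentwise derivatives
  set f : ℝ → ℝ := fun s => y s ⬝ᵥ P *ᵥ y s with hf_def
  have hf : ∀ t ∈ Set.Icc a c,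
      HasDerivAt f ((A t *ᵥ y t) ⬝ᵥ P *ᵥ y t + y t ⬝ᵥ P *ᵥ (A t *ᵥ y t)) t := by
    intro t ht
    have hcomp : ∀ i, HasDerivAt (fun s => y s i) ((A t *ᵥ y t) i) t := fun i =>
      ((ContinuousLinearMap.proj i : (Fin n → ℝ) →L[ℝ] ℝ).hasFDerivAt.comp_hasDerivAt t
        (hy t ht))
    have hsum : HasDerivAt (fun s => ∑ i, y s i * ∑ j, P i j * y s j)
        (∑ i, ((A t *ᵥ y t) i * ∑ j, P i j * y t j
          + y t i * ∑ j, P i j * (A t *ᵥ y t) j)) t := by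
      apply HasDerivAt.fun_sum
      intro i _
      exact (hcomp i).mul (HasDerivAt.fun_sum fun j _ => (hcomp j).const_mul (P i j))
    have heq : f = fun s => ∑ i, y s i * ∑ j, P i j * y s j := by
      funext s
      simp [hf_def, dotProduct, mulVec]
    rw [heq]
    convert hsum using 1
    rw [Finset.sum_add_distrib]
    simp [dotProduct, mulVec]
  -- derivative bound: f' t ≤ 2 b f t
  have hbound : ∀ t ∈ Set.Icc a c,
      (A t *ᵥ y t) ⬝ᵥ P *ᵥ y t + y t ⬝ᵥ P *ᵥ (A t *ᵥ y t) ≤ 2 * b * f t := by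
    intro t ht
    have hpsd := (hb t ht).dotProduct_mulVec_nonneg (y t)
    rw [star_trivial] at hpsd
    rw [sub_mulVec, dotProduct_sub, sub_nonneg, add_mulVec, dotProduct_add] at hpsd
    rw [hPA t ht, hAP t ht] at hpsd
    have h1 : y t ⬝ᵥ ((2 * b) • P) *ᵥ y t = 2 * b * f t := by
      rw [smul_mulVec, dotProduct_smul, smul_eq_mul, hf_def]
    have h2a : y t ⬝ᵥ ((A t)ᵀ * P) *ᵥ y t = (A t *ᵥ y t) ⬝ᵥ P *ᵥ y t := by
      rw [dotProduct_mulVec, ← vecMul_vecMul, vecMul_transpose, ← dotProduct_mulVec]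
    have h2b : y t ⬝ᵥ (P * A t) *ᵥ y t = y t ⬝ᵥ P *ᵥ (A t *ᵥ y t) := by
      rw [← mulVec_mulVec]
    rw [← h2a, ← h2b]
    linarith [hpsd, h1]
  -- the auxiliary function g
  set g : ℝ → ℝ := fun s => Real.exp (-(2 * b) * (s - a)) * f s with hg_def
  have hg : ∀ t ∈ Set.Icc a c, HasDerivAt g
      (Real.exp (-(2 * b) * (t - a)) *
          (((A t *ᵥ y t) ⬝ᵥ P *ᵥ y t + y t ⬝ᵥ P *ᵥ (A t *ᵥ y t)) - 2 * b * f t)) t := by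
    intro t ht
    have he : HasDerivAt (fun s => Real.exp (-(2 * b) * (s - a)))
        (-(2 * b) * Real.exp (-(2 * b) * (t - a))) t := by
      have h1 : HasDerivAt (fun s : ℝ => -(2 * b) * (s - a)) (-(2 * b)) t := by
        simpa using (((hasDerivAt_id t).sub_const a).const_mul (-(2 * b)))
      simpa [mul_comm] using h1.exp
    have := he.mul (hf t ht)
    refine this.congr_deriv ?_
    ring
  have hganti : AntitoneOn g (Set.Icc a c) := by
    apply antitoneOn_of_deriv_nonpos (convex_Icc a c)
    · intro t ht
      exact (hg t ht).continuousAt.continuousWithinAt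
    · intro t ht
      rw [interior_Icc] at ht
      exact (hg t (Set.mem_Icc_of_Ioo ht)).differentiableAt.differentiableWithinAt
    · intro t ht
      rw [interior_Icc] at ht
      have ht' := Set.mem_Icc_of_Ioo ht
      rw [(hg t ht').deriv]
      have hle := hbound t ht'
      have : ((A t *ᵥ y t) ⬝ᵥ P *ᵥ y t + y t ⬝ᵥ P *ᵥ (A t *ᵥ y t)) - 2 * b * f t ≤ 0 :=
        sub_nonpos.mpr hle
      exact mul_nonpos_of_nonneg_of_nonpos (Real.exp_pos _).le this
  intro t ht
  have hga : g t ≤ g a := hganti (Set.left_mem_Icc.mpr hac.le) ht ht.1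
  have hga' : Real.exp (-(2 * b) * (t - a)) * f t ≤ f a := by
    simpa [hg_def] using hga
  have := mul_le_mul_of_nonneg_left hga' (Real.exp_pos (2 * b * (t - a))).le
  calc f t = Real.exp (2 * b * (t - a)) * (Real.exp (-(2 * b) * (t - a)) * f t) := by
        rw [← mul_assoc, ← Real.exp_add]
        ring_nf
        simp
    _ ≤ Real.exp (2 * b * (t - a)) * f a := this
end

section
/- (Lemma 5, variational form.) Let M = {1, …, M} be a finite mode set, let each A_q : [t₀, ∞) → ℝ^{n×n} be continuous, and let σ : [t₀, ∞) → M be a switching signal with switching times t₀ < t₁ < t₂ < …, t_k → ∞, σ constant on each [t_k, t_{k+1}). Let y : [t₀, ∞) → ℝⁿ be differentiable with y'(t) = A_{σ(t)}(t) y(t) for all t ≥ t₀. Let V ⊆ ℝⁿ be a subspace with orthogonal projections Π_V, Π_{V⊥}, and suppose Π_V A_q(t) Π_{V⊥} = 0 for all q ∈ M and t ≥ t₀. Let M = S ∪ U be a partition of the modes, and for each q ∈ M let P_q ∈ ℝ^{n×n} be symmetric positive semidefinite with ker(P_q) = V⊥. Assume there are constants β_S > 1, β_U ∈ (0,1), η_S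 > 0, η_U > 0, 0 < m̲ ≤ m̄ such that: (i) at every switching time t_k (k ≥ 1), writing q⁻ for the mode active on [t_{k−1}, t_k) and q⁺ for the mode active α on [t_k, t_{k+1}), one has P_{q⁺} ⪯ β_S P_{q⁻} if q⁻ ∈ S and P_{q⁺} ⪯ β_U P_{q⁻} if q⁻ ∈ U; (ii) m̲ Π_V ⪯ P_q ⪯ m̄ Π_V for all q ∈ M; (iii) for all t ≥ t₀, P_q A_q(t) Π_V + Π_V A_q(t)ᵀ P_q ⪯ −2η_S P_q if q ∈ S, and P_q A_q(t) Π_V + Π_V A_q(t)ᵀ P_q ⪯ 2η_U P_q if q ∈ U. Assume further: for each q ∈ S there exist τ_q > ln(β_S)/(2η_S) and N̲_q ≥ 0 with N_q(a,b) ≤ N̲_q + T_q(a,b)/τ_q for all t₀ ≤ a ≤ b, and for each q ∈ U there exist 0 < τ̄_q < −ln(β_U)/(2η_U) and N̄_q ≥ 0 with N_q(a,b) ≥ N̄_q + T_q(a,b)/τ̄_q for all t₀ ≤ a ≤ b. Then there exist constants k > 0 and λ > 0 such that ‖Π_V y(t)‖₂ ≤ k e^{−λ(t−t₀)} ‖Π_V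 y(t₀)‖₂ for all t ≥ t₀. -/
open Matrix MeasureTheory

/-- Number of activations of mode `q` (w.r.t. switching times `ts`, modes `qs`)
whose activation interval `[ts k, ts (k+1))` intersects `[a, b)`. -/
noncomputable def Nact {Q : Type*} (ts : ℕ → ℝ) (qs : ℕ → Q) (q : Q) (a b : ℝ) : ℕ :=
  Set.ncard {k : ℕ | qs k = q ∧ (Set.Ico (ts k) (ts (k + 1)) ∩ Set.Ico a b).Nonempty}

/-- Total activation time of mode `q` within `[a, b)` for the signal `σ`. -/
noncomputable def Tact {Q : Type*} (σ : ℝ → Q) (q : Q) (a b : ℝ) : ℝ :=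
  (volume {s : ℝ | s ∈ Set.Ico a b ∧ σ s = q}).toReal

lemma dot_self_nonneg {n : ℕ} (v : Fin n → ℝ) : 0 ≤ v ⬝ᵥ v :=
  Finset.sum_nonneg fun i _ => mul_self_nonneg _

lemma matrix_zero_of_mulVec {n : ℕ} (M : Matrix (Fin n) (Fin n) ℝ)
    (h : ∀ v, M *ᵥ v = 0) : M = 0 := by
  ext i j
  have := congrFun (h (Pi.single j 1)) i
  simpa using this

lemma hasDerivAt_quad {n : ℕ} (P : Matrix (Fin n) (Fin n) ℝ)
    (y : ℝ → Fin n → ℝ) (v : Fin n → ℝ) (t : ℝ) (hy : HasDerivAt y v t) :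
    HasDerivAt (fun s => P.mulVec (y s) ⬝ᵥ y s)
      (P.mulVec v ⬝ᵥ y t + P.mulVec (y t) ⬝ᵥ v) t := by
  have hyi : ∀ i, HasDerivAt (fun s => y s i) (v i) t := hasDerivAt_pi.1 hy
  have h1 : ∀ i : Fin n, HasDerivAt (fun s => (∑ j, P i j * y s j) * y s i)
      ((∑ j, P i j * v j) * y t i + (∑ j, P i j * y t j) * v i) t := fun i =>
    (HasDerivAt.fun_sum fun j _ => (hyi j).const_mul (P i j)).mul (hyi i)
  have h2 := HasDerivAt.fun_sum (fun i (_ : i ∈ Finset.univ) => h1 i)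
  have heq : (fun s => P.mulVec (y s) ⬝ᵥ y s) = fun s => ∑ i, (∑ j, P i j * y s j) * y s i := by
    funext s; simp [Matrix.mulVec, dotProduct]
  rw [heq]
  refine h2.congr_deriv ?_
  simp [Matrix.mulVec, dotProduct, Finset.sum_add_distrib]

lemma gronwall_exp (W : ℝ → ℝ) (r a b : ℝ) (hab : a ≤ b)
    (hcont : ContinuousOn W (Set.Icc a b))
    (hderiv : ∀ t ∈ Set.Ico a b, ∃ W', HasDerivAt W W' t ∧ W' ≤ r * W t) :
    W b ≤ W a * Real.exp (r * (b - a)) := by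
  set g : ℝ → ℝ := fun t => W t * Real.exp (-r * t) with hg
  have hexp : ∀ x : ℝ, HasDerivAt (fun s : ℝ => Real.exp (-r * s))
      (Real.exp (-r * x) * (-r)) x := by
    intro x
    simpa using ((hasDerivAt_id x).const_mul (-r)).exp
  have hanti : AntitoneOn g (Set.Icc a b) := by
    apply antitoneOn_of_deriv_nonpos (convex_Icc a b)
    · exact hcont.mul ((Real.continuous_exp.comp (continuous_const.mul continuous_id)).continuousOn)
    · intro x hx
      rw [interior_Icc] at hx
      obtain ⟨W', hW', _⟩ := hderiv x ⟨le_of_lt hx.1, hx.2⟩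
      exact (hW'.mul (hexp x)).differentiableAt.differentiableWithinAt
    · intro x hx
      rw [interior_Icc] at hx
      obtain ⟨W', hW', hle⟩ := hderiv x ⟨le_of_lt hx.1, hx.2⟩
      have hd : HasDerivAt g (W' * Real.exp (-r * x) + W x * (Real.exp (-r * x) * (-r))) x :=
        hW'.mul (hexp x)
      rw [hd.deriv]
      nlinarith [Real.exp_pos (-r * x)]
  have h := hanti (Set.left_mem_Icc.2 hab) (Set.right_mem_Icc.2 hab) hab
  have h2 := mul_le_mul_of_nonneg_right h (Real.exp_pos (r * b)).le
  simp only [hg] at h2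
  rw [mul_assoc, mul_assoc, ← Real.exp_add, ← Real.exp_add] at h2
  have e1 : -r * b + r * b = 0 := by ring
  have e2 : -r * a + r * b = r * (b - a) := by ring
  rw [e1, e2, Real.exp_zero, mul_one] at h2
  exact h2

lemma locate (ts : ℕ → ℝ) (s : ℝ) (h0 : ts 0 ≤ s) (hex : ∃ m, s < ts m) :
    ∃ j, ts j ≤ s ∧ s < ts (j + 1) := by
  classical
  have hm : s < ts (Nat.find hex) := Nat.find_spec hex
  have hm0 : Nat.find hex ≠ 0 := by
    intro h0'
    rw [h0'] at hm
    exact absurd hm (not_lt.2 h0)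
  obtain ⟨K, hK⟩ := Nat.exists_eq_succ_of_ne_zero hm0
  refine ⟨K, ?_, ?_⟩
  · by_contra hc
    exact Nat.find_min hex (by omega) (not_le.1 hc)
  · rw [hK] at hm; exact hm

lemma exists_interval (ts : ℕ → ℝ) (htop : Filter.Tendsto ts Filter.atTop Filter.atTop)
    (t : ℝ) (h : ts 0 ≤ t) : ∃ K, ts K ≤ t ∧ t < ts (K + 1) :=
  locate ts t h ((htop.eventually_gt_atTop t).exists)

lemma Nact_eq_card {Q : Type*} (ts : ℕ → ℝ) (hmono : StrictMono ts) (qs : ℕ → Q)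
    (q : Q) (K : ℕ) (t : ℝ) (h2 : t < ts (K + 1))
    [DecidablePred fun j => qs j = q ∧ ts j < t] :
    Nact ts qs q (ts 0) t =
      ((Finset.range (K + 1)).filter (fun j => qs j = q ∧ ts j < t)).card := by
  rw [Nact]
  have hset : {k : ℕ | qs k = q ∧ (Set.Ico (ts k) (ts (k + 1)) ∩ Set.Ico (ts 0) t).Nonempty}
      = ↑((Finset.range (K + 1)).filter (fun j => qs j = q ∧ ts j < t)) := by
    ext k
    simp only [Set.mem_setOf_eq, Finset.coe_filter, Finset.mem_range, Set.mem_setOf_eq]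
    constructor
    · rintro ⟨hq, s, ⟨⟨hs1, _⟩, _, hs4⟩⟩
      have hkt : ts k < t := lt_of_le_of_lt hs1 hs4
      exact ⟨hmono.lt_iff_lt.1 (lt_trans hkt h2), hq, hkt⟩
    · rintro ⟨_, hq, hkt⟩
      exact ⟨hq, ts k, ⟨⟨le_refl _, hmono (Nat.lt_succ_self k)⟩,
        hmono.monotone (Nat.zero_le k), hkt⟩⟩
  rw [hset, Set.ncard_coe_finset]

lemma Tact_eq_sum {Q : Type*} (ts : ℕ → ℝ) (hmono : StrictMono ts) (qs : ℕ → Q) (σ : ℝ → Q)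
    (hσ : ∀ k, ∀ s ∈ Set.Ico (ts k) (ts (k + 1)), σ s = qs k)
    (q : Q) (K : ℕ) (t : ℝ) (h1 : ts K ≤ t) (h2 : t < ts (K + 1))
    [DecidablePred fun j => qs j = q] :
    Tact σ q (ts 0) t = ∑ j ∈ (Finset.range (K + 1)).filter (fun j => qs j = q),
      (min (ts (j + 1)) t - ts j) := by
  classical
  set F := (Finset.range (K + 1)).filter (fun j => qs j = q) with hF
  have hlen : ∀ j ∈ F, 0 ≤ min (ts (j + 1)) t - ts j := by
    intro j hj
    rw [hF, Finset.mem_filter, Finset.mem_range] at hj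
    have hjK : ts j ≤ ts K := hmono.monotone (by omega)
    have : ts j ≤ min (ts (j + 1)) t :=
      le_min (hmono (Nat.lt_succ_self j)).le (le_trans hjK h1)
    linarith
  have hsets : {s : ℝ | s ∈ Set.Ico (ts 0) t ∧ σ s = q}
      = ⋃ j ∈ F, Set.Ico (ts j) (min (ts (j + 1)) t) := by
    ext s
    simp only [Set.mem_setOf_eq, Set.mem_Ico, Set.mem_iUnion, exists_prop]
    constructor
    · rintro ⟨⟨h0, hst⟩, hσq⟩
      obtain ⟨j, hj1, hj2⟩ := locate ts s h0 ⟨K + 1, lt_trans hst h2⟩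
      have hqj : qs j = q := by rw [← hσ j s ⟨hj1, hj2⟩]; exact hσq
      have hjK : j < K + 1 := by
        have : ts j < ts (K + 1) := lt_of_le_of_lt hj1 (lt_trans hst h2)
        exact hmono.lt_iff_lt.1 this
      refine ⟨j, ?_, hj1, lt_min hj2 hst⟩
      rw [hF, Finset.mem_filter, Finset.mem_range]; exact ⟨hjK, hqj⟩
    · rintro ⟨j, hjF, hs1, hs2⟩
      rw [hF, Finset.mem_filter, Finset.mem_range] at hjF
      have hs2' : s < ts (j + 1) := lt_of_lt_of_le hs2 (min_le_left _ _)
      have hst : s < t := lt_of_lt_of_le hs2 (min_le_right _ _)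
      refine ⟨⟨le_trans (hmono.monotone (Nat.zero_le j)) hs1, hst⟩, ?_⟩
      rw [hσ j s ⟨hs1, hs2'⟩]; exact hjF.2
  have hdisj : (↑F : Set ℕ).PairwiseDisjoint
      (fun j => Set.Ico (ts j) (min (ts (j + 1)) t)) := by
    intro i _ j _ hij
    have key : ∀ a b : ℕ, a < b → Disjoint (Set.Ico (ts a) (min (ts (a + 1)) t))
        (Set.Ico (ts b) (min (ts (b + 1)) t)) := by
      intro a b hab
      apply Set.disjoint_left.2
      rintro x ⟨_, hx2⟩ ⟨hx3, _⟩
      have h1' : ts (a + 1) ≤ ts b := hmono.monotone (by omega)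
      have := lt_of_lt_of_le (lt_of_lt_of_le hx2 (min_le_left _ _)) h1'
      exact absurd hx3 (not_le.2 this)
    rcases lt_or_gt_of_ne hij with h | h
    · exact key _ _ h
    · exact (key _ _ h).symm
  rw [Tact, hsets, measure_biUnion_finset hdisj (fun b _ => measurableSet_Ico)]
  rw [ENNReal.toReal_sum (fun a _ => by simp [Real.volume_Ico, ENNReal.ofReal_ne_top])]
  refine Finset.sum_congr rfl (fun j hj => ?_)
  rw [Real.volume_Ico, ENNReal.toReal_ofReal (hlen j hj)]

lemma psd_dot {n : ℕ} {M : Matrix (Fin n) (Fin n) ℝ} (h : M.PosSemidef)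
    (x : Fin n → ℝ) : 0 ≤ x ⬝ᵥ M *ᵥ x := by
  simpa using h.dotProduct_mulVec_nonneg x

lemma psd_transpose_eq {n : ℕ} {M : Matrix (Fin n) (Fin n) ℝ} (h : M.PosSemidef) :
    Mᵀ = M := by
  have h1 := h.1
  ext i j
  have h2 := congrFun (congrFun h1 i) j
  simpa [Matrix.conjTranspose_apply] using h2

lemma vecMul_symm {n : ℕ} {M : Matrix (Fin n) (Fin n) ℝ} (hsym : Mᵀ = M)
    (v : Fin n → ℝ) : v ᵥ* M = M *ᵥ v := by
  nth_rewrite 1 [← hsym]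
  exact Matrix.vecMul_transpose M v

lemma proj_quad {n : ℕ} {Pv : Matrix (Fin n) (Fin n) ℝ} (hsym : Pvᵀ = Pv)
    (hidem : Pv * Pv = Pv) (x : Fin n → ℝ) :
    Pv *ᵥ x ⬝ᵥ Pv *ᵥ x = Pv *ᵥ x ⬝ᵥ x := by
  rw [dotProduct_mulVec, vecMul_symm hsym, mulVec_mulVec, hidem]

lemma ub_bound {n : ℕ} {M1 M2 : Matrix (Fin n) (Fin n) ℝ} {β : ℝ}
    (h : (β • M1 - M2).PosSemidef) (x : Fin n → ℝ) :
    M2 *ᵥ x ⬝ᵥ x ≤ β * (M1 *ᵥ x ⬝ᵥ x) := by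
  have h0 := psd_dot h x
  rw [Matrix.sub_mulVec, dotProduct_sub, Matrix.smul_mulVec, dotProduct_smul,
    smul_eq_mul] at h0
  have e1 : x ⬝ᵥ M1 *ᵥ x = M1 *ᵥ x ⬝ᵥ x := dotProduct_comm _ _
  have e2 : x ⬝ᵥ M2 *ᵥ x = M2 *ᵥ x ⬝ᵥ x := dotProduct_comm _ _
  rw [e1, e2] at h0
  linarith

lemma lb_bound {n : ℕ} {M1 M2 : Matrix (Fin n) (Fin n) ℝ} {β : ℝ}
    (h : (M2 - β • M1).PosSemidef) (x : Fin n → ℝ) :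
    β * (M1 *ᵥ x ⬝ᵥ x) ≤ M2 *ᵥ x ⬝ᵥ x := by
  have h0 := psd_dot h x
  rw [Matrix.sub_mulVec, dotProduct_sub, Matrix.smul_mulVec, dotProduct_smul,
    smul_eq_mul] at h0
  have e1 : x ⬝ᵥ M1 *ᵥ x = M1 *ᵥ x ⬝ᵥ x := dotProduct_comm _ _
  have e2 : x ⬝ᵥ M2 *ᵥ x = M2 *ᵥ x ⬝ᵥ x := dotProduct_comm _ _
  rw [e1, e2] at h0
  linarith

lemma quad_bound {n : ℕ} (Pq A Pv : Matrix (Fin n) (Fin n) ℝ) (r : ℝ)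
    (hPsym : Pqᵀ = Pq) (hPvsym : Pvᵀ = Pv)
    (hPA : Pq * A = Pq * A * Pv)
    (hLMI : (r • Pq - (Pq * A * Pv + Pv * Aᵀ * Pq)).PosSemidef)
    (x : Fin n → ℝ) :
    Pq *ᵥ (A *ᵥ x) ⬝ᵥ x + Pq *ᵥ x ⬝ᵥ (A *ᵥ x) ≤ r * (Pq *ᵥ x ⬝ᵥ x) := by
  set c := x ⬝ᵥ ((Pq * A) *ᵥ x) with hc
  have htr : Pv * Aᵀ * Pq = (Pq * A * Pv)ᵀ := by
    rw [Matrix.transpose_mul, Matrix.transpose_mul, hPsym, hPvsym, mul_assoc]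
  have eA : x ⬝ᵥ ((Pq * A * Pv) *ᵥ x) = c := by rw [← hPA]
  have eB : x ⬝ᵥ ((Pv * Aᵀ * Pq) *ᵥ x) = c := by
    rw [htr, ← hPA, dotProduct_mulVec, Matrix.vecMul_transpose]
    exact dotProduct_comm _ _
  have eD1 : Pq *ᵥ (A *ᵥ x) ⬝ᵥ x = c := by
    rw [mulVec_mulVec]; exact dotProduct_comm _ _
  have eD2 : Pq *ᵥ x ⬝ᵥ (A *ᵥ x) = c := by
    rw [dotProduct_comm, dotProduct_mulVec, vecMul_symm hPsym, mulVec_mulVec]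
    exact dotProduct_comm _ _
  have h0 := psd_dot hLMI x
  rw [Matrix.sub_mulVec, Matrix.add_mulVec, dotProduct_sub, dotProduct_add,
    Matrix.smul_mulVec, dotProduct_smul, smul_eq_mul, eA, eB] at h0
  have e1 : x ⬝ᵥ Pq *ᵥ x = Pq *ᵥ x ⬝ᵥ x := dotProduct_comm _ _
  rw [e1] at h0
  linarith [h0, eD1, eD2]

/-- Lemma 5, variational form: semi-contraction of a switched
variational system within the subspace `V = ran Pv`. -/
theorem semi_contraction_in_subspace
    (n : ℕ) (Q : Type*) [Fintype Q]
    (t0 : ℝ) (A : Q → ℝ → Matrix (Fin n) (Fin n) ℝ)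
    (hAcont : ∀ q, ContinuousOn (A q) (Set.Ici t0))
    (ts : ℕ → ℝ) (hts0 : ts 0 = t0) (hmono : StrictMono ts)
    (htop : Filter.Tendsto ts Filter.atTop Filter.atTop)
    (qs : ℕ → Q) (σ : ℝ → Q)
    (hσ : ∀ k, ∀ s ∈ Set.Ico (ts k) (ts (k + 1)), σ s = qs k)
    (y : ℝ → Fin n → ℝ)
    (hy : ∀ t, t0 ≤ t → HasDerivAt y ((A (σ t) t).mulVec (y t)) t)
    (Pv : Matrix (Fin n) (Fin n) ℝ) (hPvsym : Pv.IsSymm) (hPvidem : Pv * Pv = Pv)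
    (hinv : ∀ q, ∀ t, t0 ≤ t → Pv * A q t * (1 - Pv) = 0)
    (S : Set Q)
    (P : Q → Matrix (Fin n) (Fin n) ℝ)
    (hPpsd : ∀ q, (P q).PosSemidef)
    (hPker : ∀ q, ∀ w : Fin n → ℝ, (P q).mulVec w = 0 ↔ Pv.mulVec w = 0)
    (βS βU ηS ηU mlo mhi : ℝ)
    (hβS : 1 < βS) (hβU0 : 0 < βU) (hβU1 : βU < 1)
    (hηS : 0 < ηS) (hηU : 0 < ηU) (hmlo : 0 < mlo) (hm : mlo ≤ mhi)
    (hswitchS : ∀ k : ℕ, qs k ∈ S → (βS • P (qs k) - P (qs (k + 1))).PosSemidef)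
    (hswitchU : ∀ k : ℕ, qs k ∉ S → (βU • P (qs k) - P (qs (k + 1))).PosSemidef)
    (hPlo : ∀ q, (P q - mlo • Pv).PosSemidef)
    (hPhi : ∀ q, (mhi • Pv - P q).PosSemidef)
    (hLMIS : ∀ q ∈ S, ∀ t, t0 ≤ t →
      ((-(2 * ηS)) • P q - (P q * A q t * Pv + Pv * (A q t)ᵀ * P q)).PosSemidef)
    (hLMIU : ∀ q ∉ S, ∀ t, t0 ≤ t →
      ((2 * ηU) • P q - (P q * A q t * Pv + Pv * (A q t)ᵀ * P q)).PosSemidef)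
    (hdwellS : ∀ q ∈ S, ∃ τ Nlo : ℝ, Real.log βS / (2 * ηS) < τ ∧ 0 ≤ Nlo ∧
      ∀ a b : ℝ, t0 ≤ a → a ≤ b →
        (Nact ts qs q a b : ℝ) ≤ Nlo + Tact σ q a b / τ)
    (hdwellU : ∀ q ∉ S, ∃ τ Nhi : ℝ, 0 < τ ∧ τ < -Real.log βU / (2 * ηU) ∧ 0 ≤ Nhi ∧
      ∀ a b : ℝ, t0 ≤ a → a ≤ b →
        Nhi + Tact σ q a b / τ ≤ (Nact ts qs q a b : ℝ)) :
    ∃ k lam : ℝ, 0 < k ∧ 0 < lam ∧ ∀ t, t0 ≤ t →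
      Real.sqrt (Pv.mulVec (y t) ⬝ᵥ Pv.mulVec (y t))
        ≤ k * Real.exp (-lam * (t - t0)) *
          Real.sqrt (Pv.mulVec (y t0) ⬝ᵥ Pv.mulVec (y t0)) := by
  classical
  haveI hQne : Nonempty Q := ⟨σ t0⟩
  have hPvsym' : Pvᵀ = Pv := hPvsym
  have hPsym : ∀ q, (P q)ᵀ = P q := fun q => psd_transpose_eq (hPpsd q)
  have hPPv : ∀ q, P q * Pv = P q := by
    intro q
    have hz : P q * (1 - Pv) = 0 := by
      apply matrix_zero_of_mulVec
      intro v
      rw [← Matrix.mulVec_mulVec]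
      apply (hPker q _).2
      rw [Matrix.mulVec_mulVec, Matrix.mul_sub, Matrix.mul_one, hPvidem, sub_self,
        Matrix.zero_mulVec]
    rw [Matrix.mul_sub, Matrix.mul_one, sub_eq_zero] at hz
    exact hz.symm
  have hPA : ∀ q t, t0 ≤ t → P q * A q t = P q * A q t * Pv := by
    intro q t ht
    have h1 : Pv * A q t = Pv * A q t * Pv := by
      have h2 := hinv q t ht
      rw [Matrix.mul_sub, Matrix.mul_one, sub_eq_zero] at h2
      exact h2
    calc P q * A q t = P q * (Pv * A q t) := by rw [← mul_assoc, hPPv]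
      _ = P q * (Pv * A q t * Pv) := by rw [← h1]
      _ = P q * A q t * Pv := by rw [← mul_assoc, ← mul_assoc, hPPv]
  set βf : Q → ℝ := fun q => if q ∈ S then βS else βU with hβf
  set rf : Q → ℝ := fun q => if q ∈ S then -(2 * ηS) else 2 * ηU with hrf
  set Wf : Q → ℝ → ℝ := fun q t => (P q) *ᵥ (y t) ⬝ᵥ (y t) with hWf
  have hβpos : ∀ q, 0 < βf q := by
    intro q
    by_cases h : q ∈ S <;> simp only [hβf, h, if_true, if_false] <;> linarith
  have hWnn : ∀ q t, 0 ≤ Wf q t := by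
    intro q t
    have h := psd_dot (hPpsd q) (y t)
    rw [dotProduct_comm] at h
    exact h
  have hcontW : ∀ q s, t0 ≤ s → ContinuousAt (Wf q) s := by
    intro q s hs
    exact (hasDerivAt_quad (P q) y _ s (hy s hs)).continuousAt
  have hts_t0 : ∀ k, t0 ≤ ts k := by
    intro k
    rw [← hts0]
    exact hmono.monotone (Nat.zero_le k)
  have flow : ∀ k b, ts k ≤ b → b ≤ ts (k + 1) →
      Wf (qs k) b ≤ Wf (qs k) (ts k) * Real.exp (rf (qs k) * (b - ts k)) := by
    intro k b hb1 hb2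
    apply gronwall_exp _ _ _ _ hb1
    · intro s hs
      exact (hcontW (qs k) s (le_trans (hts_t0 k) hs.1)).continuousWithinAt
    · intro s hs
      have hs0 : t0 ≤ s := le_trans (hts_t0 k) hs.1
      have hσs : σ s = qs k := hσ k s ⟨hs.1, lt_of_lt_of_le hs.2 hb2⟩
      have hd := hasDerivAt_quad (P (qs k)) y _ s (hy s hs0)
      rw [hσs] at hd
      refine ⟨_, hd, ?_⟩
      by_cases hqS : qs k ∈ S
      · have hb := quad_bound (P (qs k)) (A (qs k) s) Pv (-(2 * ηS)) (hPsym _) hPvsym'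
          (hPA _ s hs0) (hLMIS _ hqS s hs0) (y s)
        have hre : rf (qs k) = -(2 * ηS) := by simp [hrf, hqS]
        rw [hre]
        exact hb
      · have hb := quad_bound (P (qs k)) (A (qs k) s) Pv (2 * ηU) (hPsym _) hPvsym'
          (hPA _ s hs0) (hLMIU _ hqS s hs0) (y s)
        have hre : rf (qs k) = 2 * ηU := by simp [hrf, hqS]
        rw [hre]
        exact hb
  have jump : ∀ k, Wf (qs (k + 1)) (ts (k + 1)) ≤ βf (qs k) * Wf (qs k) (ts (k + 1)) := by
    intro k
    by_cases hqS : qs k ∈ S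
    · have h := ub_bound (hswitchS k hqS) (y (ts (k + 1)))
      have hb : βf (qs k) = βS := by simp [hβf, hqS]
      rw [hb]
      exact h
    · have h := ub_bound (hswitchU k hqS) (y (ts (k + 1)))
      have hb : βf (qs k) = βU := by simp [hβf, hqS]
      rw [hb]
      exact h
  set Ek : ℕ → ℝ := fun m => ∑ j ∈ Finset.range m,
    (Real.log (βf (qs j)) + rf (qs j) * (ts (j + 1) - ts j)) with hEk
  have ind : ∀ k, Wf (qs k) (ts k) ≤ Real.exp (Ek k) * Wf (qs 0) (ts 0) := by
    intro k
    induction k with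
    | zero => simp [hEk]
    | succ k ih =>
      have h1 := jump k
      have h2 := flow k (ts (k + 1)) (hmono (Nat.lt_succ_self k)).le le_rfl
      have h3 : Wf (qs (k + 1)) (ts (k + 1)) ≤
          βf (qs k) * (Wf (qs k) (ts k) * Real.exp (rf (qs k) * (ts (k + 1) - ts k))) :=
        le_trans h1 (mul_le_mul_of_nonneg_left h2 (hβpos _).le)
      have h4 : Wf (qs k) (ts k) * Real.exp (rf (qs k) * (ts (k + 1) - ts k)) ≤
          (Real.exp (Ek k) * Wf (qs 0) (ts 0)) * Real.exp (rf (qs k) * (ts (k + 1) - ts k)) :=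
        mul_le_mul_of_nonneg_right ih (Real.exp_pos _).le
      calc Wf (qs (k + 1)) (ts (k + 1)) ≤
          βf (qs k) * ((Real.exp (Ek k) * Wf (qs 0) (ts 0)) *
            Real.exp (rf (qs k) * (ts (k + 1) - ts k))) :=
            le_trans h3 (mul_le_mul_of_nonneg_left h4 (hβpos _).le)
        _ = Real.exp (Ek (k + 1)) * Wf (qs 0) (ts 0) := by
            simp only [hEk]
            rw [Finset.sum_range_succ, Real.exp_add, Real.exp_add,
              Real.exp_log (hβpos (qs k))]
            ring
  have key : ∀ q : Q, ∃ Cq δq : ℝ, 0 ≤ Cq ∧ 0 < δq ∧ ∀ b : ℝ, t0 ≤ b → ∀ J : ℝ,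
      J ≤ (Nact ts qs q t0 b : ℝ) → (Nact ts qs q t0 b : ℝ) ≤ J + 1 →
      Real.log (βf q) * J + rf q * Tact σ q t0 b + δq * Tact σ q t0 b ≤ Cq := by
    intro q
    by_cases hqS : q ∈ S
    · obtain ⟨τ, Nlo, hτ, hNlo, hN⟩ := hdwellS q hqS
      have hlog : 0 < Real.log βS := Real.log_pos hβS
      have h2η : (0:ℝ) < 2 * ηS := by linarith
      have hτ0 : 0 < τ := lt_trans (div_pos hlog h2η) hτ
      have hβq : βf q = βS := by simp [hβf, hqS]
      have hrq : rf q = -(2 * ηS) := by simp [hrf, hqS]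
      refine ⟨Real.log βS * Nlo, 2 * ηS - Real.log βS / τ, mul_nonneg hlog.le hNlo, ?_, ?_⟩
      · have h5 := (div_lt_iff₀ h2η).1 hτ
        rw [sub_pos, div_lt_iff₀ hτ0]
        linarith
      · intro b hb J hJ1 hJ2
        have hT0 : 0 ≤ Tact σ q t0 b := ENNReal.toReal_nonneg
        have hNb := hN t0 b le_rfl hb
        rw [hβq, hrq]
        have hJN : J ≤ Nlo + Tact σ q t0 b / τ := le_trans hJ1 hNb
        have h3 : Real.log βS * J ≤ Real.log βS * (Nlo + Tact σ q t0 b / τ) :=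
          mul_le_mul_of_nonneg_left hJN hlog.le
        have hfield : Real.log βS * (Nlo + Tact σ q t0 b / τ) =
            Real.log βS * Nlo + Real.log βS / τ * Tact σ q t0 b := by
          field_simp
        rw [hfield] at h3
        linarith
    · obtain ⟨τ, Nhi, hτ0, hτub, hNhi, hN⟩ := hdwellU q hqS
      have hlogU : Real.log βU < 0 := Real.log_neg hβU0 hβU1
      have h2η : (0:ℝ) < 2 * ηU := by linarith
      have hβq : βf q = βU := by simp [hβf, hqS]
      have hrq : rf q = 2 * ηU := by simp [hrf, hqS]
      have h4 : Real.log βU / τ < -(2 * ηU) := by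
        rw [div_lt_iff₀ hτ0]
        have h5 := (lt_div_iff₀ h2η).1 hτub
        linarith
      refine ⟨-Real.log βU, -(Real.log βU / τ + 2 * ηU), by linarith, by linarith, ?_⟩
      intro b hb J hJ1 hJ2
      have hT0 : 0 ≤ Tact σ q t0 b := ENNReal.toReal_nonneg
      have hNb := hN t0 b le_rfl hb
      rw [hβq, hrq]
      have hJlb : Tact σ q t0 b / τ - 1 ≤ J := by linarith
      have h3 : Real.log βU * J ≤ Real.log βU * (Tact σ q t0 b / τ - 1) :=
        mul_le_mul_of_nonpos_left hJlb hlogU.le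
      have hfield : Real.log βU * (Tact σ q t0 b / τ - 1) =
          Real.log βU / τ * Tact σ q t0 b - Real.log βU := by
        field_simp
      rw [hfield] at h3
      linarith
  choose Cf δf hCnn hδpos hkey using key
  set Cc : ℝ := ∑ q : Q, Cf q with hCc
  set δ : ℝ := Finset.univ.inf' Finset.univ_nonempty δf with hδ
  have hδpos' : 0 < δ := by
    rw [hδ, Finset.lt_inf'_iff]
    exact fun q _ => hδpos q
  have hδle : ∀ q, δ ≤ δf q := fun q => Finset.inf'_le _ (Finset.mem_univ q)
  have hCcnn : 0 ≤ Cc := Finset.sum_nonneg fun q _ => hCnn q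
  have claim : ∀ t, t0 ≤ t → Wf (σ t) t ≤ Real.exp (Cc - δ * (t - t0)) * Wf (σ t0) t0 := by
    intro t ht
    obtain ⟨K, hK1, hK2⟩ := exists_interval ts htop t (by rwa [hts0])
    have hσt : σ t = qs K := hσ K t ⟨hK1, hK2⟩
    have hσt0 : σ t0 = qs 0 := by
      apply hσ 0
      constructor
      · rw [hts0]
      · rw [← hts0]
        exact hmono Nat.zero_lt_one
    have h1 := flow K t hK1 hK2.le
    have h2 := ind K
    have h3 : Wf (qs K) t ≤
        Real.exp (Ek K + rf (qs K) * (t - ts K)) * Wf (qs 0) (ts 0) := by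
      calc Wf (qs K) t ≤ Wf (qs K) (ts K) * Real.exp (rf (qs K) * (t - ts K)) := h1
        _ ≤ (Real.exp (Ek K) * Wf (qs 0) (ts 0)) * Real.exp (rf (qs K) * (t - ts K)) :=
          mul_le_mul_of_nonneg_right h2 (Real.exp_pos _).le
        _ = Real.exp (Ek K + rf (qs K) * (t - ts K)) * Wf (qs 0) (ts 0) := by
          rw [Real.exp_add]
          ring
    set lenf : ℕ → ℝ := fun j => min (ts (j + 1)) t - ts j with hlenf
    have hlen_nn : ∀ j, j < K + 1 → 0 ≤ lenf j := by
      intro j hj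
      have hjt : ts j ≤ t := le_trans (hmono.monotone (by omega : j ≤ K)) hK1
      have h5 := le_min (hmono (Nat.lt_succ_self j)).le hjt
      simp only [hlenf]
      linarith
    have hEsplit : Ek K + rf (qs K) * (t - ts K) =
        (∑ j ∈ Finset.range K, Real.log (βf (qs j))) +
          ∑ j ∈ Finset.range (K + 1), rf (qs j) * lenf j := by
      simp only [hEk, hlenf]
      rw [Finset.sum_range_succ, Finset.sum_add_distrib]
      have hmin : ∀ j ∈ Finset.range K, rf (qs j) * (min (ts (j + 1)) t - ts j) =
          rf (qs j) * (ts (j + 1) - ts j) := by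
        intro j hj
        rw [Finset.mem_range] at hj
        rw [min_eq_left (le_trans (hmono.monotone (by omega : j + 1 ≤ K)) hK1)]
      rw [Finset.sum_congr rfl hmin, min_eq_right hK2.le]
      ring
    set Jf : Q → ℕ := fun q => ((Finset.range K).filter (fun j => qs j = q)).card with hJf
    set Tf : Q → ℝ := fun q =>
      ∑ j ∈ (Finset.range (K + 1)).filter (fun j => qs j = q), lenf j with hTf
    have hgroup1 : ∑ j ∈ Finset.range K, Real.log (βf (qs j)) =
        ∑ q : Q, Real.log (βf q) * (Jf q : ℝ) := by
      have hfib : (∑ q : Q, ∑ j ∈ Finset.filter (fun j => qs j = q) (Finset.range K),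
          Real.log (βf (qs j))) = ∑ j ∈ Finset.range K, Real.log (βf (qs j)) :=
        Finset.sum_fiberwise _ _ _
      rw [← hfib]
      refine Finset.sum_congr rfl fun q _ => ?_
      simp only [hJf]
      rw [Finset.sum_congr rfl (fun j hj => by rw [(Finset.mem_filter.1 hj).2]),
        Finset.sum_const, nsmul_eq_mul, mul_comm]
    have hgroup2 : ∑ j ∈ Finset.range (K + 1), rf (qs j) * lenf j =
        ∑ q : Q, rf q * Tf q := by
      have hfib : (∑ q : Q, ∑ j ∈ Finset.filter (fun j => qs j = q) (Finset.range (K + 1)),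
          rf (qs j) * lenf j) = ∑ j ∈ Finset.range (K + 1), rf (qs j) * lenf j :=
        Finset.sum_fiberwise _ _ _
      rw [← hfib]
      refine Finset.sum_congr rfl fun q _ => ?_
      simp only [hTf]
      rw [Finset.mul_sum]
      refine Finset.sum_congr rfl fun j hj => ?_
      rw [(Finset.mem_filter.1 hj).2]
    have hTf_nn : ∀ q, 0 ≤ Tf q := by
      intro q
      simp only [hTf]
      refine Finset.sum_nonneg fun j hj => ?_
      exact hlen_nn j (Finset.mem_range.1 (Finset.mem_filter.1 hj).1)
    have hsumT : ∑ q : Q, Tf q = t - t0 := by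
      simp only [hTf]
      have hfib : (∑ q : Q, ∑ j ∈ Finset.filter (fun j => qs j = q) (Finset.range (K + 1)),
          lenf j) = ∑ j ∈ Finset.range (K + 1), lenf j := Finset.sum_fiberwise _ _ _
      rw [hfib]
      have htel : ∀ j ∈ Finset.range (K + 1), lenf j = min (ts (j + 1)) t - min (ts j) t := by
        intro j hj
        rw [Finset.mem_range] at hj
        have h5 : min (ts j) t = ts j :=
          min_eq_left (le_trans (hmono.monotone (by omega : j ≤ K)) hK1)
        simp only [hlenf]
        rw [h5]
      rw [Finset.sum_congr rfl htel, Finset.sum_range_sub (fun j => min (ts j) t),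
        min_eq_right hK2.le, min_eq_left (by rw [hts0]; exact ht), hts0]
    have hNact_eq : ∀ q : Q, Nact ts qs q t0 t =
        ((Finset.range (K + 1)).filter (fun j => qs j = q ∧ ts j < t)).card := by
      intro q
      rw [← hts0]
      exact Nact_eq_card ts hmono qs q K t hK2
    have hTact_eq : ∀ q : Q, Tact σ q t0 t = Tf q := by
      intro q
      simp only [hTf, hlenf]
      rw [← hts0]
      exact Tact_eq_sum ts hmono qs σ hσ q K t hK1 hK2
    have hperq : ∀ q : Q, Real.log (βf q) * (Jf q : ℝ) + rf q * Tf q + δ * Tf q ≤ Cf q := by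
      intro q
      have hJle : ((Jf q : ℕ) : ℝ) ≤ (Nact ts qs q t0 t : ℝ) := by
        rw [hNact_eq q]
        have hsub : (Finset.range K).filter (fun j => qs j = q) ⊆
            (Finset.range (K + 1)).filter (fun j => qs j = q ∧ ts j < t) := by
          intro j hj
          rw [Finset.mem_filter, Finset.mem_range] at hj ⊢
          exact ⟨by omega, hj.2, lt_of_lt_of_le (hmono hj.1) hK1⟩
        simp only [hJf]
        exact_mod_cast Finset.card_le_card hsub
      have hNle : (Nact ts qs q t0 t : ℝ) ≤ ((Jf q : ℕ) : ℝ) + 1 := by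
        rw [hNact_eq q]
        have hsub : (Finset.range (K + 1)).filter (fun j => qs j = q ∧ ts j < t) ⊆
            ((Finset.range K).filter (fun j => qs j = q)) ∪ {K} := by
          intro j hj
          rw [Finset.mem_filter, Finset.mem_range] at hj
          rw [Finset.mem_union, Finset.mem_filter, Finset.mem_range, Finset.mem_singleton]
          rcases Nat.lt_succ_iff_lt_or_eq.1 hj.1 with h | h
          · exact Or.inl ⟨h, hj.2.1⟩
          · exact Or.inr h
        have h6 := le_trans (Finset.card_le_card hsub) (Finset.card_union_le _ _)
        rw [Finset.card_singleton] at h6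
        simp only [hJf]
        exact_mod_cast h6
      have hk := hkey q t ht ((Jf q : ℕ) : ℝ) hJle hNle
      rw [hTact_eq q] at hk
      have h7 := mul_le_mul_of_nonneg_right (hδle q) (hTf_nn q)
      linarith
    have hEbound : Ek K + rf (qs K) * (t - ts K) ≤ Cc - δ * (t - t0) := by
      rw [hEsplit, hgroup1, hgroup2, hCc, ← hsumT]
      calc (∑ q : Q, Real.log (βf q) * (Jf q : ℝ)) + ∑ q : Q, rf q * Tf q
          = ∑ q : Q, (Real.log (βf q) * (Jf q : ℝ) + rf q * Tf q) := by
            rw [Finset.sum_add_distrib]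
        _ ≤ ∑ q : Q, (Cf q - δ * Tf q) := Finset.sum_le_sum fun q _ => by linarith [hperq q]
        _ = (∑ q : Q, Cf q) - δ * ∑ q : Q, Tf q := by
            rw [Finset.sum_sub_distrib, Finset.mul_sum]
    calc Wf (σ t) t = Wf (qs K) t := by rw [hσt]
      _ ≤ Real.exp (Cc - δ * (t - t0)) * Wf (qs 0) (ts 0) :=
        le_trans h3 (mul_le_mul_of_nonneg_right (Real.exp_le_exp.2 hEbound) (hWnn _ _))
      _ = Real.exp (Cc - δ * (t - t0)) * Wf (σ t0) t0 := by rw [hσt0, hts0]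
  have hmhi : 0 < mhi := lt_of_lt_of_le hmlo hm
  refine ⟨Real.sqrt (mhi / mlo * Real.exp Cc), δ / 2, ?_, by linarith, ?_⟩
  · apply Real.sqrt_pos.2
    positivity
  · intro t ht
    have hlo := lb_bound (hPlo (σ t)) (y t)
    have hhi := ub_bound (hPhi (σ t0)) (y t0)
    have hproj_t := proj_quad hPvsym' hPvidem (y t)
    have hproj_t0 := proj_quad hPvsym' hPvidem (y t0)
    have hcl := claim t ht
    have hu0 : 0 ≤ Pv *ᵥ y t0 ⬝ᵥ Pv *ᵥ y t0 := dot_self_nonneg _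
    have h5 : mlo * (Pv *ᵥ y t ⬝ᵥ Pv *ᵥ y t) ≤
        Real.exp (Cc - δ * (t - t0)) * (mhi * (Pv *ᵥ y t0 ⬝ᵥ Pv *ᵥ y t0)) := by
      rw [hproj_t, hproj_t0]
      calc mlo * (Pv *ᵥ y t ⬝ᵥ y t) ≤ P (σ t) *ᵥ y t ⬝ᵥ y t := hlo
        _ ≤ Real.exp (Cc - δ * (t - t0)) * (P (σ t0) *ᵥ y t0 ⬝ᵥ y t0) := hcl
        _ ≤ Real.exp (Cc - δ * (t - t0)) * (mhi * (Pv *ᵥ y t0 ⬝ᵥ y t0)) :=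
          mul_le_mul_of_nonneg_left hhi (Real.exp_pos _).le
    have hkC : (0:ℝ) ≤ mhi / mlo * Real.exp Cc := by positivity
    set R : ℝ := Real.sqrt (mhi / mlo * Real.exp Cc) * Real.exp (-(δ / 2) * (t - t0)) *
      Real.sqrt (Pv *ᵥ y t0 ⬝ᵥ Pv *ᵥ y t0) with hR
    have hRnn : 0 ≤ R := by
      rw [hR]
      positivity
    have hexp2 : Real.exp (-(δ / 2) * (t - t0)) * Real.exp (-(δ / 2) * (t - t0)) =
        Real.exp (-(δ * (t - t0))) := by
      rw [← Real.exp_add]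
      ring_nf
    have hR2 : R ^ 2 = mhi / mlo * Real.exp Cc * Real.exp (-(δ * (t - t0))) *
        (Pv *ᵥ y t0 ⬝ᵥ Pv *ᵥ y t0) := by
      rw [hR, mul_pow, mul_pow, Real.sq_sqrt hkC, Real.sq_sqrt hu0, pow_two, hexp2]
    have hrhs : mlo * (mhi / mlo * Real.exp Cc * Real.exp (-(δ * (t - t0))) *
        (Pv *ᵥ y t0 ⬝ᵥ Pv *ᵥ y t0)) =
        Real.exp (Cc - δ * (t - t0)) * (mhi * (Pv *ᵥ y t0 ⬝ᵥ Pv *ᵥ y t0)) := by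
      rw [show Cc - δ * (t - t0) = Cc + -(δ * (t - t0)) by ring, Real.exp_add]
      field_simp
    have h6 : Pv *ᵥ y t ⬝ᵥ Pv *ᵥ y t ≤ R ^ 2 := by
      rw [hR2]
      rw [← hrhs] at h5
      exact le_of_mul_le_mul_left h5 hmlo
    calc Real.sqrt (Pv *ᵥ y t ⬝ᵥ Pv *ᵥ y t) ≤ Real.sqrt (R ^ 2) := Real.sqrt_le_sqrt h6
      _ = R := Real.sqrt_sq hRnn
end

section
/- Let Π₁, …, Π_I ∈ ℝ^{n×n} be orthogonal projections with ⋂_{i=1}^{I} ker(Πᵢ) = {0}. Let t₀ ∈ ℝ, let y : [t₀, ∞) → ℝⁿ, and suppose there exist constants kᵢ > 0 and λᵢ > 0 such that ‖Πᵢ y(t)‖₂ ≤ kᵢ e^{−λᵢ(t−t₀)} ‖Πᵢ y(t₀)‖₂ for every i ∈ {1,…,I} and every t ≥ t₀. Then, with λ* := min_{i} λᵢ, there exists a constant k* > 0 such that ‖y(t)‖₂ ≤ k* e^{−λ*(t−t₀)} ‖y(t₀)‖₂ for all t ≥ t₀. -/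
open Matrix

/-- View a plain vector as an element of Euclidean space. -/
noncomputable def toE (n : ℕ) (x : Fin n → ℝ) : EuclideanSpace ℝ (Fin n) :=
  (WithLp.equiv 2 (Fin n → ℝ)).symm x

lemma sqrt_dot_eq_norm {n : ℕ} (x : Fin n → ℝ) :
    Real.sqrt (x ⬝ᵥ x) = ‖toE n x‖ := by
  rw [EuclideanSpace.norm_eq]
  congr 1
  simp [toE, dotProduct, Real.norm_eq_abs, sq_abs, sq]

lemma dot_eq_inner {n : ℕ} (x a : Fin n → ℝ) :
    (x ⬝ᵥ a : ℝ) = inner ℝ (toE n x) (toE n a) := by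
  simp [toE, dotProduct, PiLp.inner_apply, RCLike.inner_apply, mul_comm]

lemma proj_norm_le {n : ℕ} (P : Matrix (Fin n) (Fin n) ℝ)
    (hsym : P.IsSymm) (hidem : P * P = P) (x : Fin n → ℝ) :
    ‖toE n (P.mulVec x)‖ ≤ ‖toE n x‖ := by
  set a : Fin n → ℝ := P.mulVec x with ha
  have key : (a ⬝ᵥ a : ℝ) = x ⬝ᵥ a := by
    have h1 : (a ⬝ᵥ P.mulVec x : ℝ) = Matrix.vecMul a P ⬝ᵥ x :=
      Matrix.dotProduct_mulVec a P x
    have h2 : Matrix.vecMul a P = P.mulVec a := by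
      conv_lhs => rw [← hsym.eq]
      exact Matrix.vecMul_transpose P a
    have h3 : P.mulVec a = a := by
      rw [ha, Matrix.mulVec_mulVec, hidem]
    rw [ha] at h1 ⊢
    rw [h1, h2, h3, dotProduct_comm]
  have hnn : (0 : ℝ) ≤ a ⬝ᵥ a :=
    Finset.sum_nonneg fun i _ => mul_self_nonneg (a i)
  have hnorm2 : ‖toE n a‖ ^ 2 = (a ⬝ᵥ a : ℝ) := by
    rw [← sqrt_dot_eq_norm a, Real.sq_sqrt hnn]
  have hcs : (x ⬝ᵥ a : ℝ) ≤ ‖toE n x‖ * ‖toE n a‖ := by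
    rw [dot_eq_inner]
    exact real_inner_le_norm _ _
  have h4 : ‖toE n a‖ ^ 2 ≤ ‖toE n x‖ * ‖toE n a‖ := by rw [hnorm2, key]; exact hcs
  rcases eq_or_lt_of_le (norm_nonneg (toE n a)) with h | h
  · rw [← h]; exact norm_nonneg _
  · nlinarith

/-- If `Π 1, …, Π I` are orthogonal projections with
`⋂ ker Π i = {0}` (separating family) and `‖Π i y(t)‖₂` decays exponentially
with rate `λ i` for every `i`, then `‖y(t)‖₂` decays exponentially with rate
`λ* = min_i λ i`. -/
theorem separating_family_exponential_decay
    (n I : ℕ) (hI : 0 < I)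
    (Pv : Fin I → Matrix (Fin n) (Fin n) ℝ)
    (hsym : ∀ i, (Pv i).IsSymm) (hidem : ∀ i, Pv i * Pv i = Pv i)
    (hsep : ∀ x : Fin n → ℝ, (∀ i, (Pv i).mulVec x = 0) → x = 0)
    (t0 : ℝ) (y : ℝ → Fin n → ℝ) (k lam : Fin I → ℝ)
    (hk : ∀ i, 0 < k i) (hlam : ∀ i, 0 < lam i)
    (hdecay : ∀ i, ∀ t, t0 ≤ t →
      Real.sqrt ((Pv i).mulVec (y t) ⬝ᵥ (Pv i).mulVec (y t))
        ≤ k i * Real.exp (-lam i * (t - t0)) *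
          Real.sqrt ((Pv i).mulVec (y t0) ⬝ᵥ (Pv i).mulVec (y t0))) :
    ∃ kstar : ℝ, 0 < kstar ∧ ∀ t, t0 ≤ t →
      Real.sqrt (y t ⬝ᵥ y t)
        ≤ kstar * Real.exp (-(Finset.univ.inf'
              (Finset.univ_nonempty_iff.mpr (Fin.pos_iff_nonempty.mp hI)) lam)
            * (t - t0)) * Real.sqrt (y t0 ⬝ᵥ y t0) := by
  classical
  have hne : (Finset.univ : Finset (Fin I)).Nonempty :=
    Finset.univ_nonempty_iff.mpr (Fin.pos_iff_nonempty.mp hI)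
  set L := Finset.univ.inf' (Finset.univ_nonempty_iff.mpr (Fin.pos_iff_nonempty.mp hI)) lam
    with hLdef
  have hLle : ∀ i, L ≤ lam i := fun i => Finset.inf'_le _ (Finset.mem_univ i)
  set Kmax := Finset.univ.sup' hne k with hKmax
  have hKmaxpos : 0 < Kmax := by
    obtain ⟨i0, _, hi0⟩ := Finset.exists_mem_eq_sup' hne k
    rw [hKmax, hi0]; exact hk i0
  have hkle : ∀ i, k i ≤ Kmax := fun i => Finset.le_sup' _ (Finset.mem_univ i)
  let f : EuclideanSpace ℝ (Fin n) →ₗ[ℝ] (Fin I → EuclideanSpace ℝ (Fin n)) :=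
    { toFun := fun x i => toE n ((Pv i).mulVec ((WithLp.equiv 2 (Fin n → ℝ)) x))
      map_add' := fun x z => funext fun i => congrArg (toE n) (Matrix.mulVec_add (Pv i) x z)
      map_smul' := fun c x => funext fun i => congrArg (toE n) (Matrix.mulVec_smul (Pv i) c x) }
  have hker : LinearMap.ker f = ⊥ := by
    rw [LinearMap.ker_eq_bot']
    intro x hx
    have hx' : ∀ i, (Pv i).mulVec x.ofLp = 0 := fun i => by
      have h := congrFun hx i
      simpa [f, toE] using h
    have hx0 := hsep _ hx'
    ext j
    simpa using congrFun hx0 j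
  obtain ⟨K, hKpos, hanti⟩ := f.exists_antilipschitzWith hker
  have hfx : ∀ x : EuclideanSpace ℝ (Fin n), ‖x‖ ≤ (K : ℝ) * ‖f x‖ := by
    intro x
    have h := hanti.le_mul_dist x 0
    simpa [dist_eq_norm, map_zero] using h
  refine ⟨(K : ℝ) * Kmax, mul_pos (by exact_mod_cast hKpos) hKmaxpos, ?_⟩
  intro t ht
  have hexp : ∀ i : Fin I, Real.exp (-lam i * (t - t0)) ≤ Real.exp (-L * (t - t0)) := by
    intro i
    apply Real.exp_le_exp.mpr
    have := hLle i
    nlinarith [sub_nonneg.mpr ht]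
  set yt : EuclideanSpace ℝ (Fin n) := toE n (y t) with hyt
  set yt0 : EuclideanSpace ℝ (Fin n) := toE n (y t0) with hyt0
  have hMnn : 0 ≤ Kmax * Real.exp (-L * (t - t0)) * ‖yt0‖ := by positivity
  have hcomp : ∀ i : Fin I, ‖f yt i‖ ≤ Kmax * Real.exp (-L * (t - t0)) * ‖yt0‖ := by
    intro i
    have hfi : ‖f yt i‖ = Real.sqrt ((Pv i).mulVec (y t) ⬝ᵥ (Pv i).mulVec (y t)) :=
      (sqrt_dot_eq_norm ((Pv i).mulVec (y t))).symm
    have h1 : ‖f yt i‖ ≤ k i * Real.exp (-lam i * (t - t0)) *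
        Real.sqrt ((Pv i).mulVec (y t0) ⬝ᵥ (Pv i).mulVec (y t0)) := by
      rw [hfi]; exact hdecay i t ht
    have h2 : Real.sqrt ((Pv i).mulVec (y t0) ⬝ᵥ (Pv i).mulVec (y t0)) ≤ ‖yt0‖ := by
      rw [sqrt_dot_eq_norm ((Pv i).mulVec (y t0))]
      exact proj_norm_le (Pv i) (hsym i) (hidem i) (y t0)
    calc ‖f yt i‖ ≤ k i * Real.exp (-lam i * (t - t0)) *
          Real.sqrt ((Pv i).mulVec (y t0) ⬝ᵥ (Pv i).mulVec (y t0)) := h1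
      _ ≤ Kmax * Real.exp (-L * (t - t0)) * ‖yt0‖ := by
          apply mul_le_mul
          · exact mul_le_mul (hkle i) (hexp i) (Real.exp_pos _).le hKmaxpos.le
          · exact h2
          · exact Real.sqrt_nonneg _
          · positivity
  have hsup : ‖f yt‖ ≤ Kmax * Real.exp (-L * (t - t0)) * ‖yt0‖ :=
    (pi_norm_le_iff_of_nonneg hMnn).mpr hcomp
  have hfinal : ‖yt‖ ≤ (K : ℝ) * (Kmax * Real.exp (-L * (t - t0)) * ‖yt0‖) :=
    le_trans (hfx yt) (mul_le_mul_of_nonneg_left hsup (by positivity))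
  rw [sqrt_dot_eq_norm (y t), sqrt_dot_eq_norm (y t0)]
  calc ‖toE n (y t)‖ ≤ (K : ℝ) * (Kmax * Real.exp (-L * (t - t0)) * ‖yt0‖) := hfinal
    _ = (K : ℝ) * Kmax * Real.exp (-L * (t - t0)) * ‖toE n (y t0)‖ := by rw [hyt0]; ring
end

section
/- Let V ⊆ ℝⁿ be an h-dimensional subspace, V ∈ ℝ^{n×h} a matrix whose columns form an orthonormal basis of V, U ∈ ℝ^{n×(n−h)} a matrix whose columns form an orthonormal basis of V⊥, T = [V | U], and Π_V = V Vᵀ the orthogonal projection onto V. Let P ∈ ℝ^{n×n} be symmetric positive semidefinite with ker(P) = V⊥, let A ∈ ℝ^{n×n}, and set P̃ = Vᵀ P V ∈ ℝ^{h×h} and Ã₁₁ = Vᵀ A V ∈ ℝ^{h×h}. Then for every b ∈ ℝ: P A Π_V + Π_V Aᵀ P ⪯ 2b P holds if and only if P̃ Ã₁₁ + Ã₁₁ᵀ P̃ ⪯ 2b P̃ holds. -/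
open Matrix

/-- With `Vb`, `Ub` orthonormal bases of `V` and `V⊥`
(`Vbᵀ Vb = I`, `Ubᵀ Ub = I`, `Vbᵀ Ub = 0`, `Vb Vbᵀ + Ub Ubᵀ = I`; a vector lies
in `V⊥` iff `Vbᵀ w = 0`), `Π_V = Vb Vbᵀ`, `P` symmetric PSD with `ker P = V⊥`,
`P̃ = Vbᵀ P Vb` and `Ã₁₁ = Vbᵀ A Vb`: for every `b`, the LMI
`P A Π_V + Π_V Aᵀ P ⪯ 2b P` holds iff `P̃ Ã₁₁ + Ã₁₁ᵀ P̃ ⪯ 2b P̃`. -/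
theorem lmi_reduction_to_subspace_coordinates
    (n h : ℕ) (hh : h ≤ n)
    (Vb : Matrix (Fin n) (Fin h) ℝ) (Ub : Matrix (Fin n) (Fin (n - h)) ℝ)
    (hV : Vbᵀ * Vb = 1) (hU : Ubᵀ * Ub = 1) (hVU : Vbᵀ * Ub = 0)
    (hcomplete : Vb * Vbᵀ + Ub * Ubᵀ = 1)
    (P : Matrix (Fin n) (Fin n) ℝ) (hP : P.PosSemidef)
    (hker : ∀ w : Fin n → ℝ, P.mulVec w = 0 ↔ Vbᵀ.mulVec w = 0)
    (A : Matrix (Fin n) (Fin n) ℝ) :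
    ∀ b : ℝ,
      ((2 * b) • P - (P * A * (Vb * Vbᵀ) + (Vb * Vbᵀ) * Aᵀ * P)).PosSemidef ↔
      ((2 * b) • (Vbᵀ * P * Vb)
        - ((Vbᵀ * P * Vb) * (Vbᵀ * A * Vb)
            + (Vbᵀ * A * Vb)ᵀ * (Vbᵀ * P * Vb))).PosSemidef := by
  intro b
  have hPsym : Pᵀ = P := by
    have := hP.isHermitian
    simpa [Matrix.IsHermitian, conjTranspose_eq_transpose_of_trivial] using this
  -- P * Ub = 0
  have hPUb : P * Ub = 0 := by
    ext i j
    have hcol : Vbᵀ.mulVec (fun k => Ub k j) = 0 := by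
      funext i'
      have := congrFun (congrFun hVU i') j
      simpa [Matrix.mul_apply, Matrix.mulVec, dotProduct] using this
    have := (hker _).2 hcol
    have := congrFun this i
    simpa [Matrix.mul_apply, Matrix.mulVec, dotProduct] using this
  -- P = P * (Vb * Vbᵀ)
  have hPVV : P * (Vb * Vbᵀ) = P := by
    have h0 : P * (Vb * Vbᵀ + Ub * Ubᵀ) = P := by rw [hcomplete, mul_one]
    rw [Matrix.mul_add, ← Matrix.mul_assoc P Ub Ubᵀ, hPUb, Matrix.zero_mul, add_zero] at h0
    exact h0
  have hVVP : (Vb * Vbᵀ) * P = P := by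
    have := congrArg Matrix.transpose hPVV
    simpa [Matrix.transpose_mul, hPsym, mul_assoc] using this
  -- P = Vb * (Vbᵀ * P * Vb) * Vbᵀ
  have hPfac : Vb * (Vbᵀ * P * Vb) * Vbᵀ = P := by
    calc Vb * (Vbᵀ * P * Vb) * Vbᵀ = (Vb * Vbᵀ) * P * (Vb * Vbᵀ) := by
          simp only [Matrix.mul_assoc]
      _ = P := by rw [hVVP, hPVV]
  set Pt := Vbᵀ * P * Vb with hPt
  set At := Vbᵀ * A * Vb with hAt
  have hAtT : Atᵀ = Vbᵀ * Aᵀ * Vb := by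
    simp [hAt, Matrix.transpose_mul, Matrix.mul_assoc]
  have hkey : (2 * b) • P - (P * A * (Vb * Vbᵀ) + (Vb * Vbᵀ) * Aᵀ * P)
      = Vb * ((2 * b) • Pt - (Pt * At + Atᵀ * Pt)) * Vbᵀ := by
    rw [hAtT]
    have h1 : P * A * (Vb * Vbᵀ) = Vb * (Pt * At) * Vbᵀ := by
      calc P * A * (Vb * Vbᵀ)
          = (Vb * Pt * Vbᵀ) * A * (Vb * Vbᵀ) := by rw [hPt, hPfac]
        _ = Vb * (Pt * At) * Vbᵀ := by rw [hAt]; simp only [Matrix.mul_assoc]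
    have h2 : (Vb * Vbᵀ) * Aᵀ * P = Vb * ((Vbᵀ * Aᵀ * Vb) * Pt) * Vbᵀ := by
      calc (Vb * Vbᵀ) * Aᵀ * P
          = (Vb * Vbᵀ) * Aᵀ * (Vb * Pt * Vbᵀ) := by rw [hPt, hPfac]
        _ = Vb * ((Vbᵀ * Aᵀ * Vb) * Pt) * Vbᵀ := by simp only [Matrix.mul_assoc]
    rw [h1, h2]
    simp only [Matrix.mul_sub, Matrix.sub_mul, Matrix.mul_add, Matrix.add_mul,
      Matrix.mul_smul, Matrix.smul_mul]
    rw [hPt, hPfac]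
  have hconjR : ∀ (M : Matrix (Fin h) (Fin h) ℝ), M.PosSemidef →
      (Vb * M * Vbᵀ).PosSemidef := fun M hM => by
    have := hM.mul_mul_conjTranspose_same Vb
    simpa [Matrix.conjTranspose_eq_transpose_of_trivial, Matrix.map_id] using this
  have hconjL : ∀ (M : Matrix (Fin n) (Fin n) ℝ), M.PosSemidef →
      (Vbᵀ * M * Vb).PosSemidef := fun M hM => by
    have := hM.mul_mul_conjTranspose_same Vbᵀ
    simpa [Matrix.conjTranspose_eq_transpose_of_trivial, Matrix.map_id] using this
  constructor
  · intro hbig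
    rw [hkey] at hbig
    have := hconjL _ hbig
    have heq : Vbᵀ * (Vb * ((2 * b) • Pt - (Pt * At + Atᵀ * Pt)) * Vbᵀ) * Vb
        = (2 * b) • Pt - (Pt * At + Atᵀ * Pt) := by
      calc Vbᵀ * (Vb * ((2 * b) • Pt - (Pt * At + Atᵀ * Pt)) * Vbᵀ) * Vb
          = (Vbᵀ * Vb) * (((2 * b) • Pt - (Pt * At + Atᵀ * Pt)) * (Vbᵀ * Vb)) := by
            simp only [Matrix.mul_assoc]
        _ = _ := by rw [hV]; simp
    rwa [heq] at this
  · intro hsmall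
    rw [hkey]
    exact hconjR _ hsmall
end
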